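/- arXiv:1004.2269 — 2 statements merged into one kernel-verified Lean document; each statement's English description precedes it below -/
import Mathlib

section
/- For every positive integer n, ∏_{r=1}^{n} f(r) = odd(∏_{r=1}^{n} h(r)), the odd part of the positive rational ∏_{r=1}^{n} h(r). -/
open Finset

/-- `g x = x` if `x` is an integer (for positive rationals: a positive integer), else `1`. -/
def g (x : ℚ) : ℚ := if x.den = 1 then x else 1

/-- `h r = r / (g(r/2) * g(r/4) * g(r/8) * ...)`; the product is finite since
`g (r / 2^i) = 1` for all `i > r`. -/
def h (r : ℕ) : ℚ := (r : ℚ) / ∏ i ∈ Finset.Icc 1 r, g ((r : ℚ) / 2 ^ i)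

/-- `f (2^k * ℓ) = ℓ^(1-k)` for `ℓ` odd, i.e. `f r = odd(r) ^ (1 - v₂(r))`. -/
def f (r : ℕ) : ℚ := (ordCompl[2] r : ℚ) ^ ((1 : ℤ) - padicValNat 2 r)

/-- The odd part of a positive rational: the unique positive rational with odd numerator
and denominator such that `q = 2 ^ (v₂ q) * odd(q)`. -/
def oddPartQ (q : ℚ) : ℚ := q / 2 ^ (padicValRat 2 q)

lemma padicValRat_zpow {q : ℚ} (hq : q ≠ 0) (k : ℤ) :
    padicValRat 2 (q ^ k) = k * padicValRat 2 q := by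
  rcases k with n | n
  · rw [Int.ofNat_eq_natCast, zpow_natCast, padicValRat.pow q]
  · rw [zpow_negSucc, padicValRat.inv, padicValRat.pow q, Int.negSucc_eq]
    push_cast
    ring

lemma padicValRat_two_two : padicValRat 2 (2 : ℚ) = 1 := by
  have := padicValRat.self (p := 2) one_lt_two
  simpa using this

lemma padicValRat_two_pow (k : ℕ) : padicValRat 2 ((2 : ℚ) ^ k) = k := by
  rw [padicValRat.pow (2:ℚ), padicValRat_two_two, mul_one]

lemma two_zpow_sum (s : Finset ℕ) (k : ℕ → ℤ) :
    ∏ r ∈ s, (2 : ℚ) ^ (k r) = 2 ^ (∑ r ∈ s, k r) := by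
  induction s using Finset.cons_induction with
  | empty => simp
  | cons a s ha ih =>
      rw [Finset.prod_cons, Finset.sum_cons, ih, zpow_add₀ (two_ne_zero : (2:ℚ) ≠ 0)]

lemma f_eq (r : ℕ) :
    f r = ((r : ℚ) / 2 ^ (padicValNat 2 r)) ^ ((1 : ℤ) - padicValNat 2 r) := by
  rw [f, Nat.factorization_def r Nat.prime_two]

lemma f_ne_zero {r : ℕ} (hr : 0 < r) : f r ≠ 0 := by
  rw [f_eq]
  exact zpow_ne_zero _ (div_ne_zero (by exact_mod_cast hr.ne') (pow_ne_zero _ two_ne_zero))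

lemma padicValRat_f {r : ℕ} (hr : 0 < r) : padicValRat 2 (f r) = 0 := by
  have hrq : (r : ℚ) ≠ 0 := by exact_mod_cast hr.ne'
  rw [f_eq, padicValRat_zpow (div_ne_zero hrq (pow_ne_zero _ two_ne_zero)),
    padicValRat.div hrq (pow_ne_zero _ two_ne_zero), padicValRat_two_pow,
    padicValRat.of_nat]
  simp

lemma aux_zpow (a b : ℚ) (ha : a ≠ 0) (hb : b ≠ 0) (m s : ℤ) :
    a / (a ^ m / b ^ s) = (a / b ^ m) ^ (1 - m) * b ^ (m * (1 - m) + s) := by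
  rw [div_zpow, ← zpow_mul, zpow_add₀ hb, zpow_sub₀ ha, zpow_one]
  field_simp

lemma h_eq {r : ℕ} (hr : 0 < r) :
    h r = f r * 2 ^ ((padicValNat 2 r : ℤ) * (1 - padicValNat 2 r)
        + ∑ i ∈ Icc 1 (padicValNat 2 r), (i : ℤ)) := by
  set v := padicValNat 2 r with hv
  have hrne : r ≠ 0 := hr.ne'
  have hvr : v ≤ r := le_of_lt (lt_of_lt_of_le (Nat.lt_two_pow_self (n := v))
    (Nat.le_of_dvd hr pow_padicValNat_dvd))
  have hfilter : (Icc 1 r).filter (fun i => ((r : ℚ) / 2 ^ i).den = 1) = Icc 1 v := by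
    ext i
    simp only [mem_filter, mem_Icc]
    have hcast : ((r : ℚ) / 2 ^ i) = ((r : ℚ) / ((2 ^ i : ℕ) : ℚ)) := by push_cast; ring
    rw [hcast, Rat.den_div_natCast_eq_one_iff _ _ (pow_ne_zero _ two_ne_zero),
      padicValNat_dvd_iff_le hrne]
    constructor
    · rintro ⟨⟨h1, _⟩, h3⟩; exact ⟨h1, h3⟩
    · rintro ⟨h1, h2⟩; exact ⟨⟨h1, h2.trans hvr⟩, h2⟩
  have hprod : ∏ i ∈ Icc 1 r, g ((r : ℚ) / 2 ^ i) = ∏ i ∈ Icc 1 v, ((r : ℚ) / 2 ^ i) := by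
    rw [← hfilter, Finset.prod_filter]
    rfl
  have hrq : (r : ℚ) ≠ 0 := by exact_mod_cast hrne
  rw [h, hprod, Finset.prod_div_distrib, Finset.prod_const, Finset.prod_pow_eq_pow_sum,
    Nat.card_Icc, f_eq, ← hv]
  have hS : ((2:ℚ) ^ (∑ i ∈ Icc 1 v, i)) = 2 ^ ((∑ i ∈ Icc 1 v, (i:ℤ))) := by
    rw [← zpow_natCast, Nat.cast_sum]
  have hv' : ((r:ℚ) ^ (v + 1 - 1)) = (r:ℚ) ^ (v : ℤ) := by
    rw [← zpow_natCast]
    norm_num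
  have hv2 : ((2:ℚ) ^ v) = (2:ℚ) ^ (v : ℤ) := by rw [← zpow_natCast]
  rw [hS, hv', hv2, aux_zpow _ _ hrq two_ne_zero]

theorem prod_f_eq_odd_part_prod_h (n : ℕ) (hn : 0 < n) :
    ∏ r ∈ Finset.Icc 1 n, f r = oddPartQ (∏ r ∈ Finset.Icc 1 n, h r) := by
  set K : ℤ := ∑ r ∈ Icc 1 n, ((padicValNat 2 r : ℤ) * (1 - padicValNat 2 r)
      + ∑ i ∈ Icc 1 (padicValNat 2 r), (i : ℤ)) with hK
  have hprod : ∏ r ∈ Icc 1 n, h r = (∏ r ∈ Icc 1 n, f r) * 2 ^ K := by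
    rw [hK, ← two_zpow_sum, ← Finset.prod_mul_distrib]
    exact Finset.prod_congr rfl fun r hr => h_eq (mem_Icc.mp hr).1
  have hF : (∏ r ∈ Icc 1 n, f r) ≠ 0 ∧ padicValRat 2 (∏ r ∈ Icc 1 n, f r) = 0 := by
    refine Finset.prod_induction f (fun x => x ≠ 0 ∧ padicValRat 2 x = 0)
      (fun a b ha hb => ⟨mul_ne_zero ha.1 hb.1, by
        rw [padicValRat.mul ha.1 hb.1, ha.2, hb.2]; ring⟩)
      ⟨one_ne_zero, padicValRat.one⟩
      (fun r hr => ⟨f_ne_zero (mem_Icc.mp hr).1, padicValRat_f (mem_Icc.mp hr).1⟩)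
  have hval : padicValRat 2 (∏ r ∈ Icc 1 n, h r) = K := by
    rw [hprod, padicValRat.mul hF.1 (zpow_ne_zero _ two_ne_zero),
      hF.2, padicValRat_zpow two_ne_zero K, padicValRat_two_two]
    ring
  rw [oddPartQ, hval, hprod, mul_div_assoc,
    div_self (zpow_ne_zero _ two_ne_zero), mul_one]
end

section
/- For every positive integer m, ∏_{r=1}^{2m+1} h(r) = (2m+1) · C(2m, m) · ∏_{r=1}^{m} h(r), where C(2m, m) is the central binomial coefficient. -/
open Finset

lemma g_div_pow (r i : ℕ) :
    g ((r : ℚ) / 2 ^ i) = if 2 ^ i ∣ r then ((r / 2 ^ i : ℕ) : ℚ) else 1 := by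
  by_cases hd : 2 ^ i ∣ r
  · obtain ⟨c, rfl⟩ := hd
    rw [if_pos ⟨c, rfl⟩]
    have h1 : ((2 ^ i * c : ℕ) : ℚ) / 2 ^ i = (c : ℚ) := by push_cast; field_simp
    have h2 : (2 ^ i * c) / 2 ^ i = c := Nat.mul_div_cancel_left c (by positivity)
    rw [h1, h2]
    unfold g
    simp
  · rw [if_neg hd]
    unfold g
    rw [if_neg]
    intro hden
    apply hd
    have hq := Rat.num_div_den ((r : ℚ) / 2 ^ i)
    rw [hden] at hq
    simp at hq
    have h3 : (((r : ℚ) / 2 ^ i).num : ℚ) * 2 ^ i = (r : ℚ) := by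
      rw [hq]; field_simp
    have hint : ((r : ℚ) / 2 ^ i).num * 2 ^ i = (r : ℤ) := by exact_mod_cast h3
    have : (2 ^ i : ℤ) ∣ (r : ℤ) := ⟨((r : ℚ) / 2 ^ i).num, by linarith [hint]⟩
    exact_mod_cast this

lemma g_pos {x : ℚ} (hx : 0 < x) : 0 < g x := by
  unfold g; split
  · exact hx
  · norm_num

lemma D_pos (r : ℕ) (hr : 0 < r) : 0 < ∏ i ∈ Icc 1 r, g ((r : ℚ) / 2 ^ i) := by
  apply Finset.prod_pos
  intro i _
  apply g_pos
  have : (0:ℚ) < r := by exact_mod_cast hr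
  positivity

lemma h_odd (r : ℕ) (hr : Odd r) : h r = r := by
  unfold h
  rw [Finset.prod_eq_one, div_one]
  intro i hi
  rw [g_div_pow, if_neg]
  intro hd
  have h1 : 1 ≤ i := (Finset.mem_Icc.mp hi).1
  have h2 : 2 ∣ r := dvd_trans (dvd_pow_self 2 (by omega)) hd
  obtain ⟨k, rfl⟩ := hr
  omega

lemma h_two_mul (s : ℕ) (hs : 0 < s) : h (2 * s) = 2 * h s / s := by
  have hD : (∏ i ∈ Icc 1 (2 * s), g (((2 * s : ℕ) : ℚ) / 2 ^ i))
      = (s : ℚ) * ∏ i ∈ Icc 1 s, g ((s : ℚ) / 2 ^ i) := by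
    rw [Finset.Icc_eq_cons_Ioc (by omega), Finset.prod_cons, ← Finset.Icc_add_one_left_eq_Ioc]
    congr 1
    · rw [g_div_pow, if_pos ⟨s, rfl⟩]
      norm_num
    · have hmap : Finset.Icc 2 (2 * s) = (Finset.Icc 1 (2 * s - 1)).map
          (addLeftEmbedding 1) := by
        rw [Finset.map_add_left_Icc]
        congr 1
        omega
      rw [show (1 + 1 : ℕ) = 2 from rfl, hmap, Finset.prod_map]
      have heq : ∀ j ∈ Icc 1 (2 * s - 1),
          g (((2 * s : ℕ) : ℚ) / 2 ^ (addLeftEmbedding 1 j)) = g ((s : ℚ) / 2 ^ j) := by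
        intro j hj
        congr 1
        simp only [addLeftEmbedding_apply]
        push_cast
        rw [pow_add]
        field_simp
      rw [Finset.prod_congr rfl heq]
      symm
      apply Finset.prod_subset
      · apply Finset.Icc_subset_Icc_right; omega
      · intro j hj hj'
        simp only [Finset.mem_Icc] at hj hj'
        rw [g_div_pow, if_neg]
        intro hd
        have := Nat.le_of_dvd hs hd
        have := Nat.lt_two_pow_self (n := j)
        omega
  unfold h
  push_cast
  rw [show ((2:ℚ) * s) = ((2 * s : ℕ) : ℚ) by push_cast; ring] at *
  rw [hD]
  have hDp := D_pos s hs
  have hs' : (s : ℚ) ≠ 0 := by exact_mod_cast hs.ne'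
  field_simp
  push_cast; ring

theorem prod_h_odd (m : ℕ) (hm : 0 < m) :
    ∏ r ∈ Finset.Icc 1 (2 * m + 1), h r
      = ((2 * m + 1 : ℕ) : ℚ) * ((2 * m).choose m : ℚ) * ∏ r ∈ Finset.Icc 1 m, h r := by
  induction m, hm using Nat.le_induction with
  | base =>
    have h1 : h 1 = 1 := by rw [h_odd 1 ⟨0, by ring⟩]; norm_num
    have h3 : h 3 = 3 := by rw [h_odd 3 ⟨1, by ring⟩]; norm_num
    have h2 : h 2 = 2 := by
      have := h_two_mul 1 (by norm_num)
      rw [h1] at this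
      norm_num at this
      exact this
    norm_num [show (2 : ℕ) * 1 + 1 = 3 from rfl,
      Finset.prod_Icc_succ_top (show 1 ≤ 2+1 by norm_num),
      Finset.prod_Icc_succ_top (show 1 ≤ 1+1 by norm_num), Finset.Icc_self, h1, h2, h3]
  | succ m hm ih =>
    have e1 : 2 * (m + 1) + 1 = (2 * m + 1) + 1 + 1 := by ring
    rw [e1, Finset.prod_Icc_succ_top (by omega), Finset.prod_Icc_succ_top (by omega),
      Finset.prod_Icc_succ_top (by omega : 1 ≤ m + 1), ih]
    rw [show 2 * m + 1 + 1 = 2 * (m + 1) by ring, h_two_mul (m + 1) (by omega),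
      h_odd (2 * (m + 1) + 1) ⟨m + 1, by ring⟩]
    have key : ((m : ℚ) + 1) * ((2 * (m + 1)).choose (m + 1) : ℚ)
        = 2 * (2 * m + 1) * ((2 * m).choose m : ℚ) := by
      have := Nat.succ_mul_centralBinom_succ m
      simp only [Nat.centralBinom] at this
      exact_mod_cast this
    have hm1 : ((m : ℚ) + 1) ≠ 0 := by positivity
    push_cast at key ⊢
    field_simp
    linear_combination (-1 : ℚ) * (∏ r ∈ Finset.Icc 1 m, h r) * h (m+1) * key
end
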